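/- arXiv:1201.4708 — 4 statements merged into one kernel-verified Lean document; each statement's English description precedes it below -/
import Mathlib

section
/- Let n ≥ 1 and let f : ℝⁿ → ℝ be continuously differentiable. Then there is a constant C, depending only on n, such that for all distinct points x, y ∈ ℝⁿ, setting δ = |x − y|, one has |f(x) − f(y)| ≤ C · |x − y| · (M_δ(|∇f|)(x) + M_δ(|∇f|)(y)), where M_δ g(z) = sup over 0 < t ≤ δ of the average of |g| over the ball B(z, t). -/
open MeasureTheory Metric

variable {n : ℕ}

lemma grad_norm (f : EuclideanSpace ℝ (Fin n) → ℝ) (x : EuclideanSpace ℝ (Fin n)) :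
    ‖gradient f x‖ = ‖fderiv ℝ f x‖ := by
  rw [gradient]; exact LinearIsometryEquiv.norm_map _ _

lemma grad_cont {f : EuclideanSpace ℝ (Fin n) → ℝ} (hf : ContDiff ℝ 1 f) :
    Continuous fun x => ‖gradient f x‖ := by
  have : Continuous fun x => gradient f x :=
    (InnerProductSpace.toDual ℝ _).symm.continuous.comp (hf.continuous_fderiv one_ne_zero)
  exact this.norm

lemma seg_bound {f : EuclideanSpace ℝ (Fin n) → ℝ} (hf : ContDiff ℝ 1 f)
    (z w : EuclideanSpace ℝ (Fin n)) :
    |f w - f z| ≤ (∫ s in (0:ℝ)..1, ‖gradient f (z + s • (w - z))‖) * ‖w - z‖ := by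
  set γ : ℝ → EuclideanSpace ℝ (Fin n) := fun s => z + s • (w - z) with hγ
  have hγc : Continuous γ := by fun_prop
  have hd : ∀ s : ℝ, HasDerivAt (fun s => f (γ s)) (fderiv ℝ f (γ s) (w - z)) s := by
    intro s
    have h1 : HasDerivAt γ (w - z) s := by
      simpa [hγ] using ((hasDerivAt_id s).smul_const (w - z)).const_add z
    exact (hf.differentiable one_ne_zero (γ s)).hasFDerivAt.comp_hasDerivAt s h1
  have hcont : Continuous fun s => fderiv ℝ f (γ s) (w - z) :=
    Continuous.clm_apply ((hf.continuous_fderiv one_ne_zero).comp hγc) continuous_const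
  have key : f w - f z = ∫ s in (0:ℝ)..1, fderiv ℝ f (γ s) (w - z) := by
    have := intervalIntegral.integral_eq_sub_of_hasDerivAt
      (f := fun s => f (γ s)) (f' := fun s => fderiv ℝ f (γ s) (w - z))
      (fun s _ => hd s) (hcont.intervalIntegrable 0 1)
    simp only [hγ] at this ⊢
    rw [this]; simp
  rw [key]
  calc |∫ s in (0:ℝ)..1, fderiv ℝ f (γ s) (w - z)|
      ≤ ∫ s in (0:ℝ)..1, |fderiv ℝ f (γ s) (w - z)| :=
        intervalIntegral.abs_integral_le_integral_abs zero_le_one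
    _ ≤ ∫ s in (0:ℝ)..1, ‖gradient f (γ s)‖ * ‖w - z‖ := by
        apply intervalIntegral.integral_mono_on zero_le_one
        · exact (hcont.abs).intervalIntegrable 0 1
        · exact (((grad_cont hf).comp hγc).mul continuous_const).intervalIntegrable 0 1
        · intro s _
          rw [grad_norm]
          exact (fderiv ℝ f (γ s)).le_opNorm (w - z)
    _ = (∫ s in (0:ℝ)..1, ‖gradient f (γ s)‖) * ‖w - z‖ := by
        rw [intervalIntegral.integral_mul_const]
variable {n : ℕ}

lemma cov (g : EuclideanSpace ℝ (Fin n) → ℝ) (z m : EuclideanSpace ℝ (Fin n)) {r s : ℝ}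
    (hs : 0 < s) :
    ∫ w in ball m r, g (z + s • (w - z)) =
      (s ^ n)⁻¹ * ∫ u in ball (z + s • (m - z)) (s * r), g u := by
  set G : EuclideanSpace ℝ (Fin n) → ℝ := (ball (z + s • (m - z)) (s * r)).indicator g with hG
  have hind : ∀ w, (ball m r).indicator (fun w => g (z + s • (w - z))) w = G (z + s • (w - z)) := by
    intro w
    have hmem : z + s • (w - z) ∈ ball (z + s • (m - z)) (s * r) ↔ w ∈ ball m r := by
      simp only [mem_ball, dist_eq_norm]
      have : z + s • (w - z) - (z + s • (m - z)) = s • (w - m) := by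
        rw [smul_sub, smul_sub]; module
      rw [this, norm_smul, Real.norm_eq_abs, abs_of_pos hs]
      exact mul_lt_mul_iff_right₀ hs
    by_cases hw : w ∈ ball m r
    · rw [Set.indicator_of_mem hw, hG, Set.indicator_of_mem (hmem.2 hw)]
    · rw [Set.indicator_of_notMem hw, hG, Set.indicator_of_notMem (fun h => hw (hmem.1 h))]
  calc ∫ w in ball m r, g (z + s • (w - z))
      = ∫ w, G (z + s • (w - z)) := by
        rw [← integral_indicator measurableSet_ball]
        exact integral_congr_ae (Filter.Eventually.of_forall hind)
    _ = ∫ w, G ((z - s • z) + s • w) := by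
        congr 1; ext w; congr 1
        rw [smul_sub]; module
    _ = |((s ^ n)⁻¹)| • ∫ u, G ((z - s • z) + u) := by
        have := Measure.integral_comp_smul volume (fun u => G ((z - s • z) + u)) s
        rw [finrank_euclideanSpace_fin] at this
        exact this
    _ = (s ^ n)⁻¹ * ∫ u, G u := by
        rw [integral_add_left_eq_self (fun u => G u) (z - s • z),
          abs_of_pos (by positivity)]
        rfl
    _ = (s ^ n)⁻¹ * ∫ u in ball (z + s • (m - z)) (s * r), g u := by
        rw [hG, integral_indicator measurableSet_ball]
variable {n : ℕ}

lemma intOn {g : EuclideanSpace ℝ (Fin n) → ℝ} (hg : Continuous g)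
    (c : EuclideanSpace ℝ (Fin n)) (t : ℝ) : IntegrableOn g (ball c t) :=
  (hg.continuousOn.integrableOn_compact (isCompact_closedBall c t)).mono_set
    ball_subset_closedBall

lemma avg_le (g : EuclideanSpace ℝ (Fin n) → ℝ) (hg : Continuous g) (hg0 : ∀ u, 0 ≤ g u)
    (z m : EuclideanSpace ℝ (Fin n)) {δ s : ℝ} (hδ : 0 < δ) (hm : dist m z ≤ δ / 2)
    (hs0 : 0 < s) :
    ⨍ w in ball m (δ/2), g (z + s • (w - z)) ∂volume ≤
      2 ^ n * ⨍ u in ball z (s * δ), g u ∂volume := by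
  have hr : (0:ℝ) < δ / 2 := by linarith
  set ms : EuclideanSpace ℝ (Fin n) := z + s • (m - z) with hms
  set κ : ℝ := (volume (ball (0 : EuclideanSpace ℝ (Fin n)) 1)).toReal with hκ
  have hκpos : 0 < κ := by
    rw [hκ]
    exact ENNReal.toReal_pos (measure_ball_pos volume 0 one_pos).ne'
      measure_ball_lt_top.ne
  have hvol : ∀ (c : EuclideanSpace ℝ (Fin n)) {t : ℝ}, 0 < t →
      (volume (ball c t)).toReal = t ^ n * κ := by
    intro c t ht
    rw [Measure.addHaar_ball_of_pos volume c ht, finrank_euclideanSpace_fin, hκ,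
      ENNReal.toReal_mul, ENNReal.toReal_ofReal (by positivity)]
  have hsub : ball ms (s * (δ/2)) ⊆ ball z (s * δ) := by
    intro u hu
    have hdz : dist ms z ≤ s * (δ/2) := by
      rw [hms, dist_eq_norm]
      have : z + s • (m - z) - z = s • (m - z) := by abel
      rw [this, norm_smul, Real.norm_eq_abs, abs_of_pos hs0]
      have : ‖m - z‖ = dist m z := by rw [dist_eq_norm]
      rw [this]
      nlinarith
    have := dist_triangle u ms z
    rw [mem_ball] at hu ⊢
    nlinarith [hu, this]
  have hint : ∫ u in ball ms (s * (δ/2)), g u ≤ ∫ u in ball z (s * δ), g u := by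
    apply setIntegral_mono_set (intOn hg z (s*δ))
      (Filter.Eventually.of_forall hg0) (HasSubset.Subset.eventuallyLE hsub)
  have hintnn : 0 ≤ ∫ u in ball z (s * δ), g u :=
    setIntegral_nonneg measurableSet_ball (fun u _ => hg0 u)
  rw [setAverage_eq, setAverage_eq, smul_eq_mul, smul_eq_mul,
    cov g z m hs0, measureReal_def, measureReal_def, hvol m hr, hvol z (by positivity)]
  rw [← hms]
  have key : ((δ/2) ^ n * κ)⁻¹ * ((s ^ n)⁻¹ * ∫ u in ball ms (s * (δ/2)), g u) ≤
      ((δ/2) ^ n * κ)⁻¹ * ((s ^ n)⁻¹ * ∫ u in ball z (s * δ), g u) := by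
    apply mul_le_mul_of_nonneg_left _ (by positivity)
    exact mul_le_mul_of_nonneg_left hint (by positivity)
  refine key.trans (le_of_eq ?_)
  have h2 : (2:ℝ) ^ n > 0 := by positivity
  have hδn : (0:ℝ) < δ ^ n := by positivity
  have hsn : (0:ℝ) < s ^ n := by positivity
  have hhalf : (δ/2) ^ n = δ ^ n / 2 ^ n := div_pow δ 2 n
  have hs2 : (((δ/2) ^ n * κ)⁻¹ : ℝ) * (s ^ n)⁻¹ = 2 ^ n * (s ^ n * δ ^ n * κ)⁻¹ := by
    rw [hhalf]; field_simp
  rw [← mul_assoc, hs2, mul_assoc, mul_pow]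

lemma le_sup {g : EuclideanSpace ℝ (Fin n) → ℝ} (hg : Continuous g) (hg0 : ∀ u, 0 ≤ g u)
    (z : EuclideanSpace ℝ (Fin n)) {δ t : ℝ} (hδ : 0 < δ) (ht : t ∈ Set.Ioc (0:ℝ) δ) :
    ⨍ u in ball z t, g u ∂volume ≤ ⨆ t ∈ Set.Ioc (0:ℝ) δ, ⨍ u in ball z t, g u ∂volume := by
  obtain ⟨p, hp, hpmax⟩ := (isCompact_closedBall z δ).exists_isMaxOn
    ⟨z, mem_closedBall_self hδ.le⟩ hg.continuousOn
  set K : ℝ := g p with hK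
  have havg : ∀ r : ℝ, r ∈ Set.Ioc (0:ℝ) δ → ⨍ u in ball z r, g u ∂volume ≤ K := by
    intro r hr
    have hvpos : 0 < (volume (ball z r)).toReal :=
      ENNReal.toReal_pos (measure_ball_pos volume z hr.1).ne' measure_ball_lt_top.ne
    rw [setAverage_eq, smul_eq_mul]
    have hle : ∫ u in ball z r, g u ≤ ∫ u in ball z r, K := by
      apply setIntegral_mono_on (intOn hg z r) (integrableOn_const measure_ball_lt_top.ne)
        measurableSet_ball
      intro u hu
      exact hpmax (closedBall_subset_closedBall hr.2 (ball_subset_closedBall hu))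
    rw [setIntegral_const, smul_eq_mul] at hle
    calc (volume (ball z r)).toReal⁻¹ * ∫ u in ball z r, g u
        ≤ (volume (ball z r)).toReal⁻¹ * ((volume (ball z r)).toReal * K) :=
          mul_le_mul_of_nonneg_left hle (by positivity)
      _ = K := by field_simp
  have hbdd : BddAbove (Set.range fun r => ⨆ (_ : r ∈ Set.Ioc (0:ℝ) δ),
      ⨍ u in ball z r, g u ∂volume) := by
    refine ⟨max K 0, ?_⟩
    rintro v ⟨r, rfl⟩
    by_cases hr : r ∈ Set.Ioc (0:ℝ) δ
    · show (⨆ (_ : r ∈ Set.Ioc (0:ℝ) δ), ⨍ u in ball z r, g u ∂volume) ≤ max K 0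
      simp only [hr, ciSup_unique]
      exact le_max_of_le_left (havg r hr)
    · haveI : IsEmpty (r ∈ Set.Ioc (0:ℝ) δ) := ⟨hr⟩
      show (⨆ (_ : r ∈ Set.Ioc (0:ℝ) δ), ⨍ u in ball z r, g u ∂volume) ≤ max K 0
      rw [Real.iSup_of_isEmpty]
      exact le_max_right _ _
  have h1 : ⨍ u in ball z t, g u ∂volume ≤ ⨆ (_ : t ∈ Set.Ioc (0:ℝ) δ),
      ⨍ u in ball z t, g u ∂volume := by
    simp only [ht, ciSup_unique, le_refl]
  exact h1.trans (le_ciSup hbdd t)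
lemma key_bound {f : EuclideanSpace ℝ (Fin n) → ℝ} (hf : ContDiff ℝ 1 f)
    (z m : EuclideanSpace ℝ (Fin n)) {δ : ℝ} (hδ : 0 < δ) (hm : dist m z ≤ δ / 2) :
    |f z - ⨍ w in ball m (δ/2), f w ∂volume| ≤
      2 ^ n * δ * ⨆ t ∈ Set.Ioc (0:ℝ) δ, ⨍ u in ball z t, ‖gradient f u‖ ∂volume := by
  set g : EuclideanSpace ℝ (Fin n) → ℝ := fun u => ‖gradient f u‖ with hg
  have hgc : Continuous g := grad_cont hf
  have hg0 : ∀ u, 0 ≤ g u := fun u => norm_nonneg _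
  set M : ℝ := ⨆ t ∈ Set.Ioc (0:ℝ) δ, ⨍ u in ball z t, g u ∂volume with hM
  set B : Set (EuclideanSpace ℝ (Fin n)) := ball m (δ/2) with hB
  have hr : (0:ℝ) < δ / 2 := by linarith
  set V : ℝ := (volume B).toReal with hV
  have hVpos : 0 < V :=
    ENNReal.toReal_pos (measure_ball_pos volume m hr).ne' measure_ball_lt_top.ne
  have hfc : Continuous f := hf.continuous
  have hfi : IntegrableOn f B := intOn hfc m (δ/2)
  -- the parametric integral
  set Φ : EuclideanSpace ℝ (Fin n) → ℝ := fun w => ∫ s in (0:ℝ)..1, g (z + s • (w - z)) with hΦ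
  have hΦc : Continuous Φ := by
    apply intervalIntegral.continuous_parametric_intervalIntegral_of_continuous'
    exact hgc.comp (by fun_prop)
  have hΦ0 : ∀ w, 0 ≤ Φ w := fun w =>
    intervalIntegral.integral_nonneg zero_le_one (fun s _ => hg0 _)
  -- Step 1
  have step1 : |f z - ⨍ w in B, f w ∂volume| ≤ V⁻¹ * ∫ w in B, |f z - f w| ∂volume := by
    have h1 : f z - ⨍ w in B, f w ∂volume = V⁻¹ * ∫ w in B, (f z - f w) ∂volume := by
      rw [setAverage_eq, smul_eq_mul,
        integral_sub (integrableOn_const (μ := volume) (s := B) (C := f z) measure_ball_lt_top.ne) (hfi : Integrable f (volume.restrict B)),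
        setIntegral_const, smul_eq_mul]
      rw [measureReal_def, ← hV]
      field_simp
    rw [h1, abs_mul, abs_of_pos (by positivity : (0:ℝ) < V⁻¹)]
    apply mul_le_mul_of_nonneg_left _ (by positivity)
    simpa [Real.norm_eq_abs] using
      norm_integral_le_integral_norm (μ := volume.restrict B) (fun w => f z - f w)
  -- Step 2 : pointwise bound
  have step2 : ∀ w ∈ B, |f z - f w| ≤ δ * Φ w := by
    intro w hwB
    have hwz : ‖w - z‖ ≤ δ := by
      have h1 : dist w m < δ / 2 := mem_ball.1 hwB
      have h2 := dist_triangle w m z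
      rw [← dist_eq_norm]
      nlinarith
    have := seg_bound hf z w
    rw [abs_sub_comm]
    calc |f w - f z| ≤ Φ w * ‖w - z‖ := this
      _ ≤ Φ w * δ := mul_le_mul_of_nonneg_left hwz (hΦ0 w)
      _ = δ * Φ w := mul_comm _ _
  -- Step 3 : integrate the pointwise bound
  have step3 : ∫ w in B, |f z - f w| ∂volume ≤ δ * ∫ w in B, Φ w ∂volume := by
    rw [← integral_const_mul]
    apply integral_mono_of_nonneg
    · exact Filter.Eventually.of_forall fun w => abs_nonneg _
    · exact ((continuous_const.mul hΦc).continuousOn.integrableOn_compact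
        (isCompact_closedBall m (δ/2))).mono_set ball_subset_closedBall
    · exact ae_restrict_of_forall_mem measurableSet_ball step2
  -- Step 4 : Fubini
  have step4 : ∫ w in B, Φ w ∂volume =
      ∫ s in Set.Ioc (0:ℝ) 1, ∫ w in B, g (z + s • (w - z)) ∂volume ∂volume := by
    have hrw : ∀ w, Φ w = ∫ s in Set.Ioc (0:ℝ) 1, g (z + s • (w - z)) ∂volume := by
      intro w; rw [hΦ]; exact intervalIntegral.integral_of_le zero_le_one
    simp_rw [hrw]
    apply integral_integral_swap
    have : (volume.restrict B).prod (volume.restrict (Set.Ioc (0:ℝ) 1)) =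
        (volume.prod volume).restrict (B ×ˢ Set.Ioc (0:ℝ) 1) :=
      Measure.prod_restrict B (Set.Ioc (0:ℝ) 1)
    rw [Function.uncurry_def]
    rw [this]
    have hcont : Continuous fun p : (EuclideanSpace ℝ (Fin n)) × ℝ =>
        g (z + p.2 • (p.1 - z)) := hgc.comp (by fun_prop)
    exact (hcont.continuousOn.integrableOn_compact
      ((isCompact_closedBall m (δ/2)).prod isCompact_Icc)).mono_set
      (Set.prod_mono ball_subset_closedBall Set.Ioc_subset_Icc_self)
  -- Step 5 : bound the inner integral
  have step5 : ∀ s ∈ Set.Ioc (0:ℝ) 1, ∫ w in B, g (z + s • (w - z)) ∂volume ≤ V * (2 ^ n * M) := by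
    intro s hs
    have h1 : ⨍ w in B, g (z + s • (w - z)) ∂volume ≤ 2 ^ n * ⨍ u in ball z (s * δ), g u ∂volume :=
      avg_le g hgc hg0 z m hδ hm hs.1
    have h2 : ⨍ u in ball z (s * δ), g u ∂volume ≤ M :=
      le_sup hgc hg0 z hδ ⟨mul_pos hs.1 hδ, by nlinarith [hs.1, hs.2]⟩
    have h3 : ⨍ w in B, g (z + s • (w - z)) ∂volume ≤ 2 ^ n * M :=
      h1.trans (by nlinarith [pow_pos (by norm_num : (0:ℝ) < 2) n])
    rw [setAverage_eq, smul_eq_mul, measureReal_def, ← hV] at h3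
    calc ∫ w in B, g (z + s • (w - z)) ∂volume
        = V * (V⁻¹ * ∫ w in B, g (z + s • (w - z)) ∂volume) := by field_simp
      _ ≤ V * (2 ^ n * M) := mul_le_mul_of_nonneg_left h3 hVpos.le
  -- Step 6 : integrate step5 over s
  have step6 : ∫ s in Set.Ioc (0:ℝ) 1, (∫ w in B, g (z + s • (w - z)) ∂volume) ∂volume ≤
      V * (2 ^ n * M) := by
    have : ∫ s in Set.Ioc (0:ℝ) 1, (V * (2 ^ n * M)) ∂volume = V * (2 ^ n * M) := by
      rw [setIntegral_const]
      simp [Real.volume_Ioc]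
    rw [← this]
    apply integral_mono_of_nonneg
    · exact Filter.Eventually.of_forall fun s =>
        setIntegral_nonneg measurableSet_ball fun w _ => hg0 _
    · exact integrableOn_const (by simp [Real.volume_Ioc])
    · exact ae_restrict_of_forall_mem measurableSet_Ioc step5
  -- put everything together
  calc |f z - ⨍ w in B, f w ∂volume|
      ≤ V⁻¹ * ∫ w in B, |f z - f w| ∂volume := step1
    _ ≤ V⁻¹ * (δ * ∫ w in B, Φ w ∂volume) :=
        mul_le_mul_of_nonneg_left step3 (by positivity)
    _ ≤ V⁻¹ * (δ * (V * (2 ^ n * M))) := by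
        apply mul_le_mul_of_nonneg_left _ (by positivity)
        apply mul_le_mul_of_nonneg_left _ hδ.le
        rw [step4]; exact step6
    _ = 2 ^ n * δ * M := by field_simp

/-- For `f : ℝⁿ → ℝ` continuously differentiable, there is `C = C(n)` such
that for all distinct `x y`, with `δ = |x - y|`,
`|f x - f y| ≤ C * |x - y| * (M_δ(|∇f|)(x) + M_δ(|∇f|)(y))`, where
`M_δ g z = ⨆ (0 < t ≤ δ), ⨍_{B(z,t)} |g|`. -/
theorem stmt0 (n : ℕ) (hn : 1 ≤ n) (f : EuclideanSpace ℝ (Fin n) → ℝ)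
    (hf : ContDiff ℝ 1 f) :
    ∃ C : ℝ, ∀ x y : EuclideanSpace ℝ (Fin n), x ≠ y →
      |f x - f y| ≤ C * dist x y *
        ((⨆ t ∈ Set.Ioc (0 : ℝ) (dist x y), ⨍ w in ball x t, ‖gradient f w‖ ∂volume) +
         (⨆ t ∈ Set.Ioc (0 : ℝ) (dist x y), ⨍ w in ball y t, ‖gradient f w‖ ∂volume)) := by
  refine ⟨2 ^ n, fun x y hxy => ?_⟩
  set δ : ℝ := dist x y with hδdef
  have hδ : 0 < δ := dist_pos.2 hxy
  set m : EuclideanSpace ℝ (Fin n) := midpoint ℝ x y with hm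
  have hmx : dist m x ≤ δ / 2 := by
    rw [dist_comm, hm, dist_left_midpoint (𝕜 := ℝ)]
    simp [Real.norm_two]
    rw [hδdef]
    ring_nf
    exact le_refl _
  have hmy : dist m y ≤ δ / 2 := by
    rw [dist_comm, hm, dist_right_midpoint (𝕜 := ℝ)]
    simp [Real.norm_two]
    rw [hδdef, dist_comm]
    ring_nf
    exact le_refl _
  have hx := key_bound hf x m hδ hmx
  have hy := key_bound hf y m hδ hmy
  set A : ℝ := ⨍ w in ball m (δ/2), f w ∂volume
  calc |f x - f y| ≤ |f x - A| + |A - f y| := abs_sub_le _ _ _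
    _ = |f x - A| + |f y - A| := by rw [abs_sub_comm A (f y)]
    _ ≤ 2 ^ n * δ * (⨆ t ∈ Set.Ioc (0:ℝ) δ, ⨍ u in ball x t, ‖gradient f u‖ ∂volume) +
        2 ^ n * δ * (⨆ t ∈ Set.Ioc (0:ℝ) δ, ⨍ u in ball y t, ‖gradient f u‖ ∂volume) :=
          add_le_add hx hy
    _ = 2 ^ n * dist x y *
        ((⨆ t ∈ Set.Ioc (0 : ℝ) (dist x y), ⨍ w in ball x t, ‖gradient f w‖ ∂volume) +
         (⨆ t ∈ Set.Ioc (0 : ℝ) (dist x y), ⨍ w in ball y t, ‖gradient f w‖ ∂volume)) := by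
      rw [← hδdef]; ring
end

section
/- Let n ≥ 1 and let f : ℝⁿ → ℝ be continuously differentiable. Then there is a constant C depending only on n such that for every x ∈ ℝⁿ and every r > 0, the average of |f(z) − f(x)| over the ball B(x, r) is at most C · r · M_r(|∇f|)(x), where M_r(|∇f|)(x) = sup over 0 < t ≤ r of the average of |∇f| over B(x, t). -/
open MeasureTheory Metric Pointwise

variable {n : ℕ}

lemma aux_norm_gradient (f : EuclideanSpace ℝ (Fin n) → ℝ) (w : EuclideanSpace ℝ (Fin n)) :
    ‖gradient f w‖ = ‖fderiv ℝ f w‖ := by simp [gradient]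

lemma aux_grad_cont {f : EuclideanSpace ℝ (Fin n) → ℝ} (hf : ContDiff ℝ 1 f) :
    Continuous (gradient f) := by
  show Continuous fun w => (InnerProductSpace.toDual ℝ _).symm (fderiv ℝ f w)
  exact (LinearIsometryEquiv.continuous _).comp (hf.continuous_fderiv one_ne_zero)

lemma aux_translate (g : EuclideanSpace ℝ (Fin n) → ℝ) (x : EuclideanSpace ℝ (Fin n)) (s : ℝ) :
    ∫ u in ball (0 : EuclideanSpace ℝ (Fin n)) s, g (x + u) = ∫ w in ball x s, g w := by
  have h := (measurePreserving_add_right (volume : Measure (EuclideanSpace ℝ (Fin n))) x).setIntegral_preimage_emb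
      (measurableEmbedding_addRight x) g (ball x s)
  have hpre : (fun u : EuclideanSpace ℝ (Fin n) => u + x) ⁻¹' (ball x s) = ball 0 s := by
    ext u; simp [mem_ball, dist_eq_norm]
  rw [hpre] at h
  simpa [add_comm] using h

lemma aux_scale (g : EuclideanSpace ℝ (Fin n) → ℝ) (x : EuclideanSpace ℝ (Fin n)) {t : ℝ} (s : ℝ) (ht : 0 < t) :
    ∫ z in ball x s, g (x + t • (z - x)) = (t ^ n)⁻¹ * ∫ w in ball x (t * s), g w := by
  have h1 : ∫ z in ball x s, g (x + t • (z - x)) = ∫ u in ball (0 : EuclideanSpace ℝ (Fin n)) s, g (x + t • u) := by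
    have h := (measurePreserving_add_right (volume : Measure (EuclideanSpace ℝ (Fin n))) x).setIntegral_preimage_emb
        (measurableEmbedding_addRight x) (fun z => g (x + t • (z - x))) (ball x s)
    have hpre : (fun u : EuclideanSpace ℝ (Fin n) => u + x) ⁻¹' (ball x s) = ball 0 s := by
      ext u; simp [mem_ball, dist_eq_norm]
    rw [hpre] at h; rw [← h]; simp
  rw [h1]
  have h2 := Measure.setIntegral_comp_smul_of_pos (volume : Measure (EuclideanSpace ℝ (Fin n)))
      (fun v => g (x + v)) (ball (0 : EuclideanSpace ℝ (Fin n)) s) ht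
  have h3 : t • ball (0 : EuclideanSpace ℝ (Fin n)) s = ball (0 : EuclideanSpace ℝ (Fin n)) (t * s) := by
    rw [_root_.smul_ball ht.ne', smul_zero, Real.norm_of_nonneg ht.le]
  rw [h3, finrank_euclideanSpace_fin] at h2
  rw [h2, aux_translate g x (t * s), smul_eq_mul]

lemma aux_ftc {f : EuclideanSpace ℝ (Fin n) → ℝ} (hf : ContDiff ℝ 1 f)
    (x z : EuclideanSpace ℝ (Fin n)) :
    |f z - f x| ≤ (∫ t in (0:ℝ)..1, ‖gradient f (x + t • (z - x))‖) * ‖z - x‖ := by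
  set γ : ℝ → EuclideanSpace ℝ (Fin n) := fun s => x + s • (z - x) with hγ
  have hγc : Continuous γ := by fun_prop
  have hd : ∀ s : ℝ, HasDerivAt (fun s => f (γ s)) ((fderiv ℝ f (γ s)) (z - x)) s := by
    intro s
    have h1 : HasDerivAt γ (z - x) s := by
      simpa [hγ] using ((hasDerivAt_id s).smul_const (z - x)).const_add x
    exact ((hf.differentiable one_ne_zero) (γ s)).hasFDerivAt.comp_hasDerivAt s h1
  have hcont : Continuous fun s => (fderiv ℝ f (γ s)) (z - x) := by
    exact (ContinuousLinearMap.apply ℝ ℝ (z - x)).continuous.comp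
      ((hf.continuous_fderiv one_ne_zero).comp hγc)
  have heq : ∫ s in (0:ℝ)..1, (fderiv ℝ f (γ s)) (z - x) = f z - f x := by
    rw [intervalIntegral.integral_eq_sub_of_hasDerivAt (fun s _ => hd s)
      (hcont.intervalIntegrable 0 1)]
    simp [hγ]
  calc |f z - f x| = ‖∫ s in (0:ℝ)..1, (fderiv ℝ f (γ s)) (z - x)‖ := by
        rw [heq]; rfl
    _ ≤ ∫ s in (0:ℝ)..1, ‖(fderiv ℝ f (γ s)) (z - x)‖ :=
        intervalIntegral.norm_integral_le_integral_norm zero_le_one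
    _ ≤ ∫ s in (0:ℝ)..1, ‖gradient f (γ s)‖ * ‖z - x‖ := by
        apply intervalIntegral.integral_mono_on zero_le_one
        · exact hcont.norm.intervalIntegrable 0 1
        · exact (((aux_grad_cont hf).comp hγc).norm.mul continuous_const).intervalIntegrable 0 1
        · intro s _
          rw [aux_norm_gradient]
          exact ContinuousLinearMap.le_opNorm _ _
    _ = (∫ s in (0:ℝ)..1, ‖gradient f (γ s)‖) * ‖z - x‖ :=
        intervalIntegral.integral_mul_const _ _


/-- For `f : ℝⁿ → ℝ` continuously differentiable there is `C = C(n)` such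
that for every `x` and `r > 0`,
`⨍_{B(x,r)} |f z - f x| dz ≤ C * r * M_r(|∇f|)(x)`, where
`M_r g z = ⨆ (0 < t ≤ r), ⨍_{B(z,t)} |g|`. -/
theorem stmt3 (n : ℕ) (hn : 1 ≤ n) (f : EuclideanSpace ℝ (Fin n) → ℝ)
    (hf : ContDiff ℝ 1 f) :
    ∃ C : ℝ, ∀ x : EuclideanSpace ℝ (Fin n), ∀ r : ℝ, 0 < r →
      (⨍ z in ball x r, |f z - f x| ∂volume) ≤
        C * r * ⨆ t ∈ Set.Ioc (0 : ℝ) r, ⨍ w in ball x t, ‖gradient f w‖ ∂volume := by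
  haveI : Nontrivial (EuclideanSpace ℝ (Fin n)) := by
    apply Module.nontrivial_of_finrank_pos (R := ℝ)
    rw [finrank_euclideanSpace_fin]
    omega
  refine ⟨1, fun x r hr => ?_⟩
  set g : EuclideanSpace ℝ (Fin n) → ℝ := fun w => ‖gradient f w‖ with hg
  have hgc : Continuous g := (aux_grad_cont hf).norm
  set A : ℝ → ℝ := fun s => ⨍ w in ball x s, g w ∂volume with hA
  set S : ℝ := ⨆ t ∈ Set.Ioc (0 : ℝ) r, A t with hS
  have hvol : ∀ s : ℝ, 0 < s → 0 < (volume (ball x s)).toReal := fun s hs =>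
    ENNReal.toReal_pos (measure_ball_pos volume x hs).ne' measure_ball_lt_top.ne
  set V : ℝ := (volume (ball x r)).toReal with hV
  have hVpos : 0 < V := hvol r hr
  obtain ⟨K, hK⟩ := (isCompact_closedBall x r).exists_bound_of_continuousOn hgc.continuousOn
  set K' : ℝ := max K 0 with hK'
  have hgK : ∀ w ∈ closedBall x r, g w ≤ K' := fun w hw =>
    le_trans (le_trans (le_abs_self _) (hK w hw)) (le_max_left _ _)
  have havg : ∀ s ∈ Set.Ioc (0:ℝ) r, A s ≤ K' := by
    intro s hs
    rw [hA]
    simp only [setAverage_eq, smul_eq_mul]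
    have h1 : ∫ w in ball x s, g w ∂volume ≤ K' * (volume (ball x s)).toReal := by
      have h2 : ∫ w in ball x s, g w ∂volume ≤ ∫ _ in ball x s, K' ∂volume := by
        apply setIntegral_mono_on
        · exact (hgc.continuousOn.integrableOn_compact (isCompact_closedBall x s)).mono_set
            ball_subset_closedBall
        · exact integrableOn_const measure_ball_lt_top.ne
        · exact measurableSet_ball
        · exact fun w hw => hgK w (closedBall_subset_closedBall hs.2 (ball_subset_closedBall hw))
      rw [setIntegral_const, smul_eq_mul, measureReal_def] at h2
      linarith
    have h3 := mul_le_mul_of_nonneg_left h1 (inv_nonneg.mpr (ENNReal.toReal_nonneg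
      (a := volume (ball x s))))
    refine le_trans h3 (le_of_eq ?_)
    field_simp [(hvol s hs.1).ne']
  have hbdd : BddAbove (Set.range fun t => ⨆ _ : t ∈ Set.Ioc (0:ℝ) r, A t) := by
    refine ⟨K', ?_⟩
    rintro _ ⟨t, rfl⟩
    show (⨆ _ : t ∈ Set.Ioc (0:ℝ) r, A t) ≤ K'
    by_cases ht : t ∈ Set.Ioc (0:ℝ) r
    · rw [ciSup_pos ht]; exact havg t ht
    · haveI : IsEmpty (t ∈ Set.Ioc (0:ℝ) r) := ⟨ht⟩
      rw [Real.iSup_of_isEmpty]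
      exact le_max_right _ _
  have hle_S : ∀ s ∈ Set.Ioc (0:ℝ) r, A s ≤ S := by
    intro s hs
    have h1 : A s = ⨆ _ : s ∈ Set.Ioc (0:ℝ) r, A s :=
      (ciSup_pos (p := s ∈ Set.Ioc (0:ℝ) r) (f := fun _ => A s) hs).symm
    rw [h1, hS]
    exact le_ciSup hbdd s
  have hFc : Continuous (Function.uncurry
      fun (z : EuclideanSpace ℝ (Fin n)) (t : ℝ) => g (x + t • (z - x))) := by
    show Continuous fun p : (EuclideanSpace ℝ (Fin n)) × ℝ => g (x + p.2 • (p.1 - x))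
    exact hgc.comp (by fun_prop)
  have hFint : Integrable (Function.uncurry
      fun (z : EuclideanSpace ℝ (Fin n)) (t : ℝ) => g (x + t • (z - x)))
      (((volume : Measure (EuclideanSpace ℝ (Fin n))).restrict (ball x r)).prod
      ((volume : Measure ℝ).restrict (Set.Ioc (0:ℝ) 1))) := by
    rw [Measure.prod_restrict]
    exact (hFc.continuousOn.integrableOn_compact
        ((isCompact_closedBall x r).prod isCompact_Icc)).mono_set
      (Set.prod_mono ball_subset_closedBall Set.Ioc_subset_Icc_self)
  set H : EuclideanSpace ℝ (Fin n) → ℝ := fun z => ∫ t in (0:ℝ)..1, g (x + t • (z - x)) with hH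
  have hHc : Continuous H :=
    intervalIntegral.continuous_parametric_intervalIntegral_of_continuous' hFc 0 1
  have hHnn : ∀ z, 0 ≤ H z := fun z =>
    intervalIntegral.integral_nonneg zero_le_one fun t _ => norm_nonneg _
  have step1 : ∫ z in ball x r, |f z - f x| ∂volume ≤ ∫ z in ball x r, r * H z ∂volume := by
    apply setIntegral_mono_on
    · exact ((hf.continuous.sub continuous_const).abs.continuousOn.integrableOn_compact
        (isCompact_closedBall x r)).mono_set ball_subset_closedBall
    · exact ((continuous_const.mul hHc).continuousOn.integrableOn_compact
        (isCompact_closedBall x r)).mono_set ball_subset_closedBall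
    · exact measurableSet_ball
    · intro z hz
      have h1 : |f z - f x| ≤ H z * ‖z - x‖ := aux_ftc hf x z
      have h2 : H z * ‖z - x‖ ≤ r * H z := by
        rw [mul_comm r (H z)]
        exact mul_le_mul_of_nonneg_left
          (le_of_lt (by rw [← dist_eq_norm]; exact mem_ball.mp hz)) (hHnn z)
      exact h1.trans h2
  have step3 : ∫ z in ball x r, H z ∂volume
      = ∫ t in Set.Ioc (0:ℝ) 1, (∫ z in ball x r, g (x + t • (z - x)) ∂volume) ∂volume := by
    have h1 : ∀ z : EuclideanSpace ℝ (Fin n),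
        H z = ∫ t in Set.Ioc (0:ℝ) 1, g (x + t • (z - x)) ∂volume := fun z => by
      rw [hH]; exact intervalIntegral.integral_of_le zero_le_one
    simp_rw [h1]
    exact integral_integral_swap hFint
  have step4 : ∀ t ∈ Set.Ioc (0:ℝ) 1,
      (∫ z in ball x r, g (x + t • (z - x)) ∂volume) ≤ V * S := by
    intro t ht
    rw [aux_scale g x r ht.1]
    have hballvol : (volume (ball x (t * r))).toReal = t ^ n * V := by
      rw [hV, Measure.addHaar_ball volume x (mul_nonneg ht.1.le hr.le),
        Measure.addHaar_ball volume x hr.le, finrank_euclideanSpace_fin, mul_pow,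
        ENNReal.ofReal_mul (pow_nonneg ht.1.le n)]
      simp only [ENNReal.toReal_mul, ENNReal.toReal_ofReal (pow_nonneg ht.1.le n)]
      ring
    have htr : t * r ∈ Set.Ioc (0:ℝ) r :=
      ⟨mul_pos ht.1 hr, mul_le_of_le_one_left hr.le ht.2⟩
    have hint : ∫ w in ball x (t * r), g w ∂volume = (t ^ n * V) * A (t * r) := by
      rw [hA]
      simp only [setAverage_eq, smul_eq_mul, measureReal_def, hballvol]
      rw [← mul_assoc, mul_inv_cancel₀ (by rw [← hballvol]; exact (hvol _ htr.1).ne'), one_mul]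
    rw [hint]
    have heq : (t ^ n)⁻¹ * (t ^ n * V * A (t * r)) = V * A (t * r) := by
      rw [show (t ^ n)⁻¹ * (t ^ n * V * A (t * r))
          = ((t ^ n)⁻¹ * t ^ n) * (V * A (t * r)) by ring,
        inv_mul_cancel₀ (pow_pos ht.1 n).ne', one_mul]
    rw [heq]
    exact mul_le_mul_of_nonneg_left (hle_S _ htr) hVpos.le
  have step5 : ∫ t in Set.Ioc (0:ℝ) 1, (∫ z in ball x r, g (x + t • (z - x)) ∂volume) ∂volume
      ≤ V * S := by
    have h1 : ∫ t in Set.Ioc (0:ℝ) 1, (∫ z in ball x r, g (x + t • (z - x)) ∂volume) ∂volume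
        ≤ ∫ _ in Set.Ioc (0:ℝ) 1, V * S ∂volume := by
      apply setIntegral_mono_on
      · exact hFint.integral_prod_right
      · exact integrableOn_const measure_Ioc_lt_top.ne
      · exact measurableSet_Ioc
      · exact step4
    have h2 : ∫ _ in Set.Ioc (0:ℝ) 1, V * S ∂volume = V * S := by
      rw [setIntegral_const, Real.volume_real_Ioc, smul_eq_mul]
      norm_num
    rw [h2] at h1
    exact h1
  have total : ∫ z in ball x r, |f z - f x| ∂volume ≤ r * (V * S) := by
    have h1 : ∫ z in ball x r, r * H z ∂volume = r * ∫ z in ball x r, H z ∂volume :=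
      MeasureTheory.integral_const_mul r _
    have h2 : r * ∫ z in ball x r, H z ∂volume ≤ r * (V * S) := by
      rw [step3]
      exact mul_le_mul_of_nonneg_left step5 hr.le
    rw [h1] at step1
    exact step1.trans h2
  rw [setAverage_eq, smul_eq_mul]
  have h2 : V⁻¹ * ∫ z in ball x r, |f z - f x| ∂volume ≤ V⁻¹ * (r * (V * S)) :=
    mul_le_mul_of_nonneg_left total (inv_nonneg.mpr hVpos.le)
  have h3 : V⁻¹ * (r * (V * S)) = 1 * r * S := by
    field_simp
  rw [h3] at h2
  exact h2
end

section
/- Let n ≥ 1, l ≥ 1, and let f : ℝⁿ → ℝ be of class C^l. Then for all x, h ∈ ℝⁿ, the l-th finite difference of f satisfies ∑_{j=0}^{l} (−1)^{l−j} (l choose j) f(x + j·h) = ∫_{[0,1]^l} D^l f(x + (t₁ + ⋯ + t_l)·h)(h, …, h) dt₁ ⋯ dt_l, where D^l f(z)(h,…,h) denotes the l-th (Fréchet) derivative of f at z evaluated on l copies of h. -/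
open MeasureTheory

section Aux
open Set Finset Function

variable {E F : Type*} [NormedAddCommGroup E] [NormedSpace ℝ E]
  [NormedAddCommGroup F] [NormedSpace ℝ F]

private lemma aux_fderiv_comp_const_add (G : E → F) (x z : E) :
    fderiv ℝ (fun y => G (x + y)) z = fderiv ℝ G (x + z) := by
  by_cases hd : DifferentiableAt ℝ G (x + z)
  · have h1 : HasFDerivAt (fun y : E => x + y) (ContinuousLinearMap.id ℝ E) z := by
      simpa using (hasFDerivAt_id z).const_add x
    have h2 := (hd.hasFDerivAt.comp z h1)
    have h4 := h2.fderiv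
    simp only [ContinuousLinearMap.comp_id] at h4
    exact h4
  · rw [fderiv_zero_of_not_differentiableAt hd, fderiv_zero_of_not_differentiableAt]
    intro hc
    apply hd
    have h3 : DifferentiableAt ℝ ((fun y => G (x + y)) ∘ (fun w : E => w - x)) (x + z) := by
      refine DifferentiableAt.comp _ ?_ (differentiableAt_id.sub_const x)
      simpa [add_sub_cancel_left] using hc
    have : ((fun y => G (x + y)) ∘ (fun w : E => w - x)) = G := by
      funext w; simp [Function.comp]
    rwa [this] at h3

private lemma aux_iteratedFDeriv_comp_const_add (f : E → F) (x : E) (l : ℕ) :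
    ∀ z : E, iteratedFDeriv ℝ l (fun y => f (x + y)) z = iteratedFDeriv ℝ l f (x + z) := by
  induction l with
  | zero => intro z; ext m; simp
  | succ l IH =>
    intro z
    rw [iteratedFDeriv_succ_eq_comp_left, iteratedFDeriv_succ_eq_comp_left]
    simp only [Function.comp]
    congr 1
    have h : (iteratedFDeriv ℝ l fun y => f (x + y)) = fun y => iteratedFDeriv ℝ l f (x + y) :=
      funext IH
    rw [h, aux_fderiv_comp_const_add]

/-- Derivatives of `f` along the line `s ↦ x + s • h`. -/
private lemma aux_line_deriv (l : ℕ) (f : E → F) (hf : ContDiff ℝ l f) (x h : E) (s : ℝ) :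
    iteratedDeriv l (fun s : ℝ => f (x + s • h)) s
      = iteratedFDeriv ℝ l f (x + s • h) (fun _ => h) := by
  have hL : (fun s : ℝ => f (x + s • h))
      = (fun y => f (x + y)) ∘ (ContinuousLinearMap.toSpanSingleton ℝ h) := by
    funext s; simp [ContinuousLinearMap.toSpanSingleton_apply]
  have hf1 : ContDiff ℝ l (fun y => f (x + y)) :=
    hf.comp (contDiff_const.add contDiff_id)
  rw [iteratedDeriv_eq_iteratedFDeriv, hL,
    ContinuousLinearMap.iteratedFDeriv_comp_right _ hf1 s le_rfl]
  simp [aux_iteratedFDeriv_comp_const_add, ContinuousLinearMap.toSpanSingleton_apply]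

/-- Splitting off one variable of the cube `[0,1]^{l+1}`. -/
private lemma aux_cube_split (l : ℕ) (F : ℝ → ℝ) (hF : Continuous F) :
    ∫ t in Icc (0 : Fin (l + 1) → ℝ) 1, F (∑ i, t i)
      = ∫ u in Icc (0 : ℝ) 1, ∫ t in Icc (0 : Fin l → ℝ) 1, F (u + ∑ i, t i) := by
  set e : (ℝ × (Fin l → ℝ)) ≃ᵐ (Fin (l + 1) → ℝ) :=
    (MeasurableEquiv.piFinSuccAbove (fun _ => ℝ) 0).symm with he
  have hem : MeasurePreserving e :=
    (volume_preserving_piFinSuccAbove (fun _ : Fin (l + 1) => ℝ) 0).symm _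
  have heI : e ⁻¹' (Icc 0 1) = Icc (0 : ℝ) 1 ×ˢ Icc (0 : Fin l → ℝ) 1 :=
    ((Fin.insertNthOrderIso (fun _ => ℝ) 0).preimage_Icc _ _).trans (Icc_prod_eq _ _)
  have hsum : ∀ p : ℝ × (Fin l → ℝ), (∑ i, e p i) = p.1 + ∑ i, p.2 i := by
    intro p
    simp only [he, MeasurableEquiv.piFinSuccAbove_symm_apply]
    rw [Fin.sum_univ_succ]
    simp [Fin.insertNth_apply_same, Fin.insertNth_apply_succAbove]
  rw [← hem.map_eq, setIntegral_map_equiv, heI, Measure.volume_eq_prod]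
  simp only [hsum]
  rw [setIntegral_prod]
  have hcont : Continuous (fun p : ℝ × (Fin l → ℝ) => F (p.1 + ∑ i, p.2 i)) :=
    hF.comp (continuous_fst.add (continuous_finset_sum _ fun i _ =>
      (continuous_apply i).comp continuous_snd))
  exact hcont.continuousOn.integrableOn_compact (isCompact_Icc.prod isCompact_Icc)

open fwdDiff in
/-- The 1-dimensional statement, phrased with the forward difference operator. -/
private lemma aux_key (l : ℕ) : ∀ (g : ℝ → ℝ), ContDiff ℝ l g → ∀ a : ℝ,
    (Δ_[(1 : ℝ)])^[l] g a
      = ∫ t in Icc (0 : Fin l → ℝ) 1, iteratedDeriv l g (a + ∑ i, t i) := by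
  induction l with
  | zero =>
    intro g hg a
    have h1 : Icc (0 : Fin 0 → ℝ) 1 = Set.univ := by
      ext t; simp [Subsingleton.elim t 0, Subsingleton.elim (1 : Fin 0 → ℝ) 0]
    simp [h1, Subsingleton.elim (fun i : Fin 0 => (0:ℝ)) 0]
    simp [Measure.real, Real.volume_Icc_pi]
  | succ l IH =>
    intro g hg a
    -- the forward difference of `g`
    set G : ℝ → ℝ := fun s => g (s + 1) - g s with hG
    have hgl : ContDiff ℝ l g := hg.of_le (by exact_mod_cast Nat.le_succ l)
    have hGc : ContDiff ℝ l G :=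
      (hgl.comp (contDiff_id.add contDiff_const)).sub hgl
    have hstep : (Δ_[(1 : ℝ)])^[l + 1] g a = (Δ_[(1 : ℝ)])^[l] G a := by
      rw [Function.iterate_succ_apply]
      rfl
    -- iterated derivative of `G`
    have hGD : ∀ s : ℝ, iteratedDeriv l G s
        = iteratedDeriv l g (s + 1) - iteratedDeriv l g s := by
      intro s
      have h1 : iteratedDeriv l (fun z : ℝ => g (z + 1)) s = iteratedDeriv l g (s + 1) := by
        rw [iteratedDeriv_comp_add_const]
      have h2 : iteratedDeriv l G s
          = iteratedDeriv l (fun z : ℝ => g (z + 1)) s - iteratedDeriv l g s := by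
        have hsub := iteratedDerivWithin_sub (𝕜 := ℝ) (x := s) (s := Set.univ)
          (Set.mem_univ s) uniqueDiffOn_univ
          (f := fun z : ℝ => g (z + 1)) (g := g) (n := l)
          ((hgl.comp (contDiff_id.add contDiff_const)).contDiffWithinAt) hgl.contDiffWithinAt
        simpa [iteratedDerivWithin_univ, hG, Pi.sub_def] using hsub
      rw [h2, h1]
    -- FTC : difference of l-th derivatives as integral of the (l+1)-st
    have hcont : Continuous (iteratedDeriv (l + 1) g) :=
      hg.continuous_iteratedDeriv (l + 1) (by exact_mod_cast le_rfl)
    have hFTC : ∀ s : ℝ, iteratedDeriv l g (s + 1) - iteratedDeriv l g s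
        = ∫ u in Icc (0 : ℝ) 1, iteratedDeriv (l + 1) g (s + u) := by
      intro s
      have hdiff : Differentiable ℝ (iteratedDeriv l g) :=
        hg.differentiable_iteratedDeriv l (by exact_mod_cast Nat.lt_succ_self l)
      have hderiv : ∀ y ∈ Set.uIcc s (s + 1),
          HasDerivAt (iteratedDeriv l g) (iteratedDeriv (l + 1) g y) y := by
        intro y _
        rw [iteratedDeriv_succ]
        exact (hdiff y).hasDerivAt
      have hint : IntervalIntegrable (iteratedDeriv (l + 1) g) volume s (s + 1) :=
        hcont.intervalIntegrable _ _
      have h5 := intervalIntegral.integral_eq_sub_of_hasDerivAt hderiv hint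
      have h6 : (∫ u in (0:ℝ)..1, iteratedDeriv (l + 1) g (s + u))
          = ∫ y in s..(s + 1), iteratedDeriv (l + 1) g y := by
        rw [intervalIntegral.integral_comp_add_left (fun y => iteratedDeriv (l+1) g y) s]
        norm_num
      have h7 : (∫ u in Icc (0 : ℝ) 1, iteratedDeriv (l + 1) g (s + u))
          = ∫ u in (0:ℝ)..1, iteratedDeriv (l + 1) g (s + u) := by
        rw [integral_Icc_eq_integral_Ioc, intervalIntegral.integral_of_le zero_le_one]
      rw [h7, h6]
      exact h5.symm
    -- put things together
    rw [hstep, IH G hGc a]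
    have hfin : ∫ t in Icc (0 : Fin l → ℝ) 1, iteratedDeriv l G (a + ∑ i, t i)
        = ∫ t in Icc (0 : Fin l → ℝ) 1, ∫ u in Icc (0 : ℝ) 1,
            iteratedDeriv (l + 1) g (a + ∑ i, t i + u) := by
      refine setIntegral_congr_fun measurableSet_Icc fun t _ => ?_
      rw [hGD, hFTC]
    rw [hfin, aux_cube_split l (fun y => iteratedDeriv (l + 1) g (a + y))
      (hcont.comp (continuous_const.add continuous_id))]
    -- swap the order of integration
    have hswap : Integrable (Function.uncurry fun (t : Fin l → ℝ) (u : ℝ) =>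
        iteratedDeriv (l + 1) g (a + ∑ i, t i + u))
        ((volume.restrict (Icc (0 : Fin l → ℝ) 1)).prod (volume.restrict (Icc (0:ℝ) 1))) := by
      rw [Measure.prod_restrict]
      exact ((hcont.comp ((continuous_const.add (continuous_finset_sum _ fun i _ =>
        (continuous_apply i).comp continuous_fst)).add continuous_snd)).continuousOn).integrableOn_compact
        (isCompact_Icc.prod isCompact_Icc)
    rw [integral_integral_swap hswap]
    congr 1
    ext u
    refine setIntegral_congr_fun measurableSet_Icc fun t _ => ?_
    ring_nf

end Aux

/-- For `f : ℝⁿ → ℝ` of class `C^l` (`l ≥ 1`) and all `x h`,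
`∑_{j=0}^{l} (−1)^{l−j} (l choose j) f(x + j·h)
  = ∫_{[0,1]^l} D^l f(x + (t₁+⋯+t_l)·h)(h,…,h) dt`. -/
theorem stmt4 (n l : ℕ) (hn : 1 ≤ n) (hl : 1 ≤ l)
    (f : EuclideanSpace ℝ (Fin n) → ℝ) (hf : ContDiff ℝ l f)
    (x h : EuclideanSpace ℝ (Fin n)) :
    ∑ j ∈ Finset.range (l + 1), (-1 : ℝ) ^ (l - j) * (l.choose j) * f (x + (j : ℝ) • h)
      = ∫ t in Set.Icc (0 : Fin l → ℝ) 1,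
          iteratedFDeriv ℝ l f (x + (∑ i, t i) • h) (fun _ => h) := by
  set g : ℝ → ℝ := fun s => f (x + s • h) with hgdef
  have hg : ContDiff ℝ l g :=
    hf.comp (contDiff_const.add (contDiff_id.smul contDiff_const))
  have h3 : ∑ j ∈ Finset.range (l + 1), (-1 : ℝ) ^ (l - j) * (l.choose j) * f (x + (j : ℝ) • h)
      = (fwdDiff (1 : ℝ))^[l] g 0 := by
    rw [fwdDiff_iter_eq_sum_shift]
    refine Finset.sum_congr rfl fun j _ => ?_
    have : ((0 : ℝ) + j • (1 : ℝ)) = (j : ℝ) := by simp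
    rw [this, zsmul_eq_mul, hgdef]
    push_cast
    ring
  rw [h3, aux_key l g hg 0]
  refine setIntegral_congr_fun measurableSet_Icc fun t _ => ?_
  rw [show (0 : ℝ) + ∑ i, t i = ∑ i, t i by rw [zero_add]]
  exact aux_line_deriv l f hf x h (∑ i, t i)
end

section
/- Let n ≥ 1, and let k ≥ l ≥ 0 be integers. Let f : ℝⁿ → ℝ be of class C^k and fix h ∈ ℝⁿ. Then the function g_h^l : ℝⁿ → ℝ defined by g_h^l(x) = ∫_{[0,1]^l} D^l f(x + (t₁ + ⋯ + t_l)·h)(h, …, h) dt₁ ⋯ dt_l is of class C^{k−l}. -/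
open MeasureTheory
open scoped Convolution

lemma stmt12_key (n l m : ℕ) (v : EuclideanSpace ℝ (Fin n) → ℝ)
    (hv : ContDiff ℝ (m : ℕ∞) v) (h : EuclideanSpace ℝ (Fin n)) :
    ContDiff ℝ (m : ℕ∞) (fun x : EuclideanSpace ℝ (Fin n) =>
      ∫ t in Set.Icc (0 : Fin l → ℝ) 1, v (x + (∑ i, t i) • h)) := by
  let E := EuclideanSpace ℝ (Fin n)
  set μ₀ : Measure (Fin l → ℝ) := volume.restrict (Set.Icc 0 1) with hμ₀
  haveI : IsFiniteMeasure μ₀ := ⟨by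
    rw [hμ₀, Measure.restrict_apply_univ]; exact isCompact_Icc.measure_lt_top⟩
  set φ : (Fin l → ℝ) → E := fun t => -((∑ i, t i) • h) with hφ
  have hφc : Continuous φ := by
    apply Continuous.neg
    exact (continuous_finset_sum _ fun i _ => continuous_apply i).smul continuous_const
  set ν : Measure E := Measure.map φ μ₀ with hν
  haveI : IsFiniteMeasure ν := ⟨by
    rw [hν, Measure.map_apply hφc.measurable MeasurableSet.univ, Set.preimage_univ]
    exact measure_lt_top _ _⟩
  -- representation of the integral as a convolution with the pushforward measure ν
  have hrep : ∀ (w : E → ℝ), Continuous w → ∀ x : E,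
      ((fun _ => (1 : ℝ)) ⋆[ContinuousLinearMap.lsmul ℝ ℝ, ν] w) x
        = ∫ t in Set.Icc (0 : Fin l → ℝ) 1, w (x + (∑ i, t i) • h) := by
    intro w hw x
    rw [convolution_def]
    simp only [ContinuousLinearMap.lsmul_apply, one_smul]
    have hcont : Continuous fun y : E => w (x - y) := by fun_prop
    rw [hν, integral_map hφc.aemeasurable hcont.aestronglyMeasurable]
    simp only [hφ, sub_neg_eq_add]
    rw [hμ₀]
  rw [contDiff_iff_contDiffAt]
  intro x₀
  set c : ℝ := (l : ℝ) * ‖h‖ + 2 with hc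
  have hc0 : (0 : ℝ) < c := by positivity
  set b : ContDiffBump x₀ := ⟨c, c + 1, hc0, by linarith⟩ with hb
  set v' : E → ℝ := fun y => b y • v y with hv'def
  have hv' : ContDiff ℝ (m : ℕ∞) v' := (b.contDiff (n := (m : ℕ∞))).smul hv
  have hcs : HasCompactSupport v' := b.hasCompactSupport.smul_right
  have hconv : ContDiff ℝ (m : ℕ∞)
      ((fun _ => (1 : ℝ)) ⋆[ContinuousLinearMap.lsmul ℝ ℝ, ν] v') :=
    hcs.contDiff_convolution_right (ContinuousLinearMap.lsmul ℝ ℝ)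
      (locallyIntegrable_const (1 : ℝ)) hv'
  refine hconv.contDiffAt.congr_of_eventuallyEq ?_
  have hball : Metric.ball x₀ 1 ∈ nhds x₀ := Metric.ball_mem_nhds x₀ one_pos
  refine Filter.eventuallyEq_of_mem hball ?_
  intro x hx
  rw [hrep v' hv'.continuous x]
  refine MeasureTheory.setIntegral_congr_fun measurableSet_Icc ?_
  intro t ht
  have ht0 : ∀ i, (0 : ℝ) ≤ t i := fun i => ht.1 i
  have ht1 : ∀ i, t i ≤ 1 := fun i => ht.2 i
  have hsum0 : (0 : ℝ) ≤ ∑ i, t i := Finset.sum_nonneg fun i _ => ht0 i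
  have hsuml : (∑ i, t i) ≤ (l : ℝ) := by
    calc (∑ i, t i) ≤ ∑ _i : Fin l, (1 : ℝ) := Finset.sum_le_sum fun i _ => ht1 i
    _ = (l : ℝ) := by simp
  have hmem : x + (∑ i, t i) • h ∈ Metric.closedBall x₀ c := by
    rw [Metric.mem_closedBall]
    have hd : dist (x + (∑ i, t i) • h) x₀ ≤ dist x x₀ + ‖(∑ i, t i) • h‖ := by
      have heq : x + (∑ i, t i) • h - x₀ = (x - x₀) + (∑ i, t i) • h := by abel
      rw [dist_eq_norm, dist_eq_norm, heq]
      exact norm_add_le _ _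
    have hn : ‖(∑ i, t i) • h‖ ≤ (l : ℝ) * ‖h‖ := by
      rw [norm_smul, Real.norm_eq_abs, abs_of_nonneg hsum0]
      exact mul_le_mul_of_nonneg_right hsuml (norm_nonneg h)
    have hxd : dist x x₀ < 1 := Metric.mem_ball.mp hx
    calc dist (x + (∑ i, t i) • h) x₀ ≤ dist x x₀ + ‖(∑ i, t i) • h‖ := hd
    _ ≤ 1 + (l : ℝ) * ‖h‖ := by linarith
    _ ≤ c := by rw [hc]; linarith
  show v (x + (∑ i, t i) • h) = v' (x + (∑ i, t i) • h)
  rw [hv'def]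
  simp only [b.one_of_mem_closedBall hmem, one_smul]

/-- For `f : ℝⁿ → ℝ` of class `C^k`, `k ≥ l ≥ 0`, and fixed `h`, the
function `g_h^l(x) = ∫_{[0,1]^l} D^l f(x + (t₁+⋯+t_l)·h)(h,…,h) dt` is of class
`C^{k−l}`. -/
theorem stmt12 (n k l : ℕ) (hn : 1 ≤ n) (hlk : l ≤ k)
    (f : EuclideanSpace ℝ (Fin n) → ℝ) (hf : ContDiff ℝ k f)
    (h : EuclideanSpace ℝ (Fin n)) :
    ContDiff ℝ (k - l : ℕ) (fun x : EuclideanSpace ℝ (Fin n) =>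
      ∫ t in Set.Icc (0 : Fin l → ℝ) 1,
        iteratedFDeriv ℝ l f (x + (∑ i, t i) • h) (fun _ => h)) := by
  have hv : ContDiff ℝ ((k - l : ℕ) : ℕ∞)
      (fun y => iteratedFDeriv ℝ l f y (fun _ => h)) := by
    have h1 : ContDiff ℝ ((k - l : ℕ) : ℕ∞) (iteratedFDeriv ℝ l f) :=
      hf.iteratedFDeriv_right (by
        norm_cast
        omega)
    exact (ContinuousMultilinearMap.apply ℝ (fun _ : Fin l => EuclideanSpace ℝ (Fin n)) ℝ
      (fun _ => h)).contDiff.comp h1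
  exact stmt12_key n l (k - l) _ hv h
end
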